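/- Fix δ with 0 < δ < ρ − L and suppose that in Algorithm niAPG every inexact proximal step satisfies F(x_{k+1}) ≤ F(v_k) − (δ/2)·‖x_{k+1} − v_k‖² for all k ≥ 1. Assume F is bounded below and coercive (F(x) → +∞ as ‖x‖ → +∞). Then the sequences (x_k) and (v_k) are bounded and each has at least one limit point; moreover lim_{k→∞} min_{t ∈ W(k)} ‖x_{t+1} − v_t‖² = 0. -/

import Mathlib

open Filter

/-- Theorem 3: boundedness and limit points, nonconvex inexact steps.
If every inexact proximal step satisfies `F x_{k+1} ≤ F v_k − (δ/2)‖x_{k+1} − v_k‖²` with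
`0 < δ < ρ − L`, and `F` is bounded below and coercive, then `(x_k)` and `(v_k)` are bounded
and each has a convergent subsequence; moreover `min_{t ∈ W(k)} ‖x_{t+1} − v_t‖² → 0`,
where `W(k) = {max(1, k−q), …, k}`. -/
theorem niAPG_nonconvex_bounded_limit_points
    {E : Type*} [NormedAddCommGroup E] [InnerProductSpace ℝ E] [FiniteDimensional ℝ E]
    (f g F : E → ℝ) (f' : E → E) (L η ρ δ : ℝ)
    (hL : 0 < L)
    (hf : ∀ x, HasGradientAt f (f' x) x)
    (hlip : ∀ x y, ‖f' x - f' y‖ ≤ L * ‖x - y‖)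
    (hg : LowerSemicontinuous g)
    (hF : ∀ x, F x = f x + g x)
    (hbdd : BddBelow (Set.range F))
    (hcoer : Tendsto F (Filter.comap (fun w : E => ‖w‖) atTop) atTop)
    (hη : 0 < η) (hηL : η < 1 / L) (hρ : ρ = 1 / η)
    (hδ : 0 < δ) (hδρ : δ < ρ - L)
    (q : ℕ) (x y v z : ℕ → E) (Δ : ℕ → ℝ)
    (hx01 : x 0 = x 1)
    (hy : ∀ k, 1 ≤ k → y k = x k + ((((k : ℝ) - 1) / ((k : ℝ) + 2)) • (x k - x (k - 1))))
    (hΔ : ∀ k, ∀ hk : 1 ≤ k, Δ k =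
      (Finset.Icc (max 1 (k - q)) k).sup' (Finset.nonempty_Icc.mpr (by omega))
        (fun t => F (x t)))
    (hv : ∀ k, 1 ≤ k → v k = if F (y k) ≤ Δ k then y k else x k)
    (hz : ∀ k, 1 ≤ k → z k = v k - η • f' (v k))
    (hdec : ∀ k, 1 ≤ k →
      F (x (k + 1)) ≤ F (v k) - (δ / 2) * ‖x (k + 1) - v k‖ ^ 2)
    -- `m j` is `min_{t ∈ W(j+1)} ‖x_{t+1} − v_t‖²`
    (m : ℕ → ℝ)
    (hm : ∀ j : ℕ, m j = (Finset.Icc (max 1 (j + 1 - q)) (j + 1)).inf'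
      (Finset.nonempty_Icc.mpr (by omega)) (fun t => ‖x (t + 1) - v t‖ ^ 2)) :
    (∃ C : ℝ, ∀ k, 1 ≤ k → ‖x k‖ ≤ C) ∧
    (∃ C : ℝ, ∀ k, 1 ≤ k → ‖v k‖ ≤ C) ∧
    (∃ x' : E, ∃ σ : ℕ → ℕ, StrictMono σ ∧
      Tendsto (fun j => x (σ j + 1)) atTop (nhds x')) ∧
    (∃ v' : E, ∃ σ : ℕ → ℕ, StrictMono σ ∧
      Tendsto (fun j => v (σ j + 1)) atTop (nhds v')) ∧
    Tendsto m atTop (nhds 0) := by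
  -- F (x k) ≤ Δ k
  have hxmem : ∀ k, 1 ≤ k → F (x k) ≤ Δ k := by
    intro k hk
    rw [hΔ k hk]
    exact Finset.le_sup' (fun t => F (x t)) (Finset.mem_Icc.mpr ⟨max_le hk (Nat.sub_le k q), le_rfl⟩)
  -- F (v k) ≤ Δ k
  have hvΔ : ∀ k, 1 ≤ k → F (v k) ≤ Δ k := by
    intro k hk
    rw [hv k hk]
    split_ifs with h
    · exact h
    · exact hxmem k hk
  -- step bound
  have hstep : ∀ k, 1 ≤ k → F (x (k + 1)) ≤ Δ k := by
    intro k hk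
    have h1 := hdec k hk
    have h2 : 0 ≤ (δ / 2) * ‖x (k + 1) - v k‖ ^ 2 :=
      mul_nonneg (by positivity) (sq_nonneg _)
    linarith [hvΔ k hk]
  -- Δ is nonincreasing
  have hmono : ∀ k, 1 ≤ k → Δ (k + 1) ≤ Δ k := by
    intro k hk
    rw [hΔ (k + 1) (by omega)]
    apply Finset.sup'_le
    intro t ht
    simp only [Finset.mem_Icc] at ht
    have ht1 : 1 ≤ t := le_trans (le_max_left _ _) ht.1
    have htq : k + 1 - q ≤ t := le_trans (le_max_right _ _) ht.1
    rcases eq_or_lt_of_le ht.2 with h | h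
    · rw [h]; exact hstep k hk
    · rw [hΔ k hk]
      exact Finset.le_sup' (fun t => F (x t)) (Finset.mem_Icc.mpr ⟨max_le ht1 (by omega), by omega⟩)
  have hanti : ∀ a b, 1 ≤ a → a ≤ b → Δ b ≤ Δ a := by
    intro a b ha hab
    induction b with
    | zero => omega
    | succ n ih =>
      rcases eq_or_lt_of_le hab with h | h
      · rw [h]
      · exact le_trans (hmono n (by omega)) (ih (by omega))
  -- coercivity: sublevel set bound
  have hco : ∃ R : ℝ, 0 ≤ R ∧ ∀ w : E, F w ≤ Δ 1 → ‖w‖ ≤ R := by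
    have h1 : ∀ᶠ w in Filter.comap (fun w : E => ‖w‖) atTop, Δ 1 + 1 ≤ F w :=
      hcoer.eventually (eventually_ge_atTop (Δ 1 + 1))
    rw [eventually_comap] at h1
    rw [eventually_atTop] at h1
    obtain ⟨R, hR⟩ := h1
    refine ⟨max R 0, le_max_right _ _, fun w hw => ?_⟩
    by_contra hcon
    push_neg at hcon
    have hRw : R ≤ ‖w‖ := le_trans (le_max_left _ _) hcon.le
    have := hR ‖w‖ hRw w rfl
    linarith
  obtain ⟨R, hR0, hR⟩ := hco
  have hxb : ∀ k, 1 ≤ k → ‖x k‖ ≤ R := by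
    intro k hk
    exact hR _ (le_trans (hxmem k hk) (hanti 1 k le_rfl hk))
  have hvb : ∀ k, 1 ≤ k → ‖v k‖ ≤ R := by
    intro k hk
    exact hR _ (le_trans (hvΔ k hk) (hanti 1 k le_rfl hk))
  -- convergent subsequences
  have hsub : ∀ u : ℕ → E, (∀ k, 1 ≤ k → ‖u k‖ ≤ R) →
      ∃ b : E, ∃ σ : ℕ → ℕ, StrictMono σ ∧ Tendsto (fun j => u (σ j + 1)) atTop (nhds b) := by
    intro u hu
    have hb : Bornology.IsBounded (Metric.closedBall (0 : E) R) := Metric.isBounded_closedBall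
    have hmem : ∀ n : ℕ, u (n + 1) ∈ Metric.closedBall (0 : E) R := by
      intro n
      rw [Metric.mem_closedBall, dist_zero_right]
      exact hu (n + 1) (by omega)
    obtain ⟨b, _, σ, hσ, htend⟩ := tendsto_subseq_of_bounded hb hmem
    exact ⟨b, σ, hσ, htend⟩
  -- Δ shifted sequence
  set D : ℕ → ℝ := fun j => Δ (j + 1) with hD
  have hDanti : Antitone D := antitone_nat_of_succ_le fun n => hmono (n + 1) (by omega)
  have hDbdd : BddBelow (Set.range D) := by
    obtain ⟨B, hB⟩ := hbdd
    refine ⟨B, ?_⟩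
    rintro r ⟨j, rfl⟩
    exact le_trans (hB ⟨x (j + 1), rfl⟩) (hxmem (j + 1) (by omega))
  have hDtend : Tendsto D atTop (nhds (⨅ j, D j)) := tendsto_atTop_ciInf hDanti hDbdd
  -- key inequality
  have hkey : ∀ j, q ≤ j → m j ≤ (2 / δ) * (D (j - q) - D (j + 1)) := by
    intro j hj
    have hΔkey : Δ (j + 2) ≤ Δ (j + 1 - q) - (δ / 2) * m j := by
      rw [hΔ (j + 2) (by omega)]
      apply Finset.sup'_le
      intro t ht
      simp only [Finset.mem_Icc] at ht
      have htq : j + 2 - q ≤ t := le_trans (le_max_right _ _) ht.1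
      have ht2 : 2 ≤ t := by omega
      have ht1 : t - 1 + 1 = t := by omega
      have h1 : F (x t) ≤ F (v (t - 1)) - (δ / 2) * ‖x t - v (t - 1)‖ ^ 2 := by
        have := hdec (t - 1) (by omega)
        rwa [ht1] at this
      have h2 : m j ≤ ‖x t - v (t - 1)‖ ^ 2 := by
        rw [hm j]
        have hmm : t - 1 ∈ Finset.Icc (max 1 (j + 1 - q)) (j + 1) :=
          Finset.mem_Icc.mpr ⟨max_le (by omega) (by omega), by omega⟩
        have := Finset.inf'_le (fun t => ‖x (t + 1) - v t‖ ^ 2) hmm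
        rwa [ht1] at this
      have h3 : Δ (t - 1) ≤ Δ (j + 1 - q) := hanti _ _ (by omega) (by omega)
      have h4 := hvΔ (t - 1) (by omega)
      have h5 : (δ / 2) * m j ≤ (δ / 2) * ‖x t - v (t - 1)‖ ^ 2 :=
        mul_le_mul_of_nonneg_left h2 (by positivity)
      linarith
    have e2 : j + 1 - q = (j - q) + 1 := by omega
    rw [e2] at hΔkey
    have hDj : D (j + 1) ≤ D (j - q) - (δ / 2) * m j := hΔkey
    calc m j = (2 / δ) * ((δ / 2) * m j) := by field_simp
      _ ≤ (2 / δ) * (D (j - q) - D (j + 1)) := by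
          apply mul_le_mul_of_nonneg_left _ (by positivity)
          linarith
  have hm0 : ∀ j, 0 ≤ m j := by
    intro j
    rw [hm j]
    apply Finset.le_inf'
    intro t ht
    positivity
  have htendR : Tendsto (fun j => (2 / δ) * (D (j - q) - D (j + 1))) atTop (nhds 0) := by
    have h1 : Tendsto (fun j : ℕ => D (j - q)) atTop (nhds (⨅ j, D j)) :=
      hDtend.comp (tendsto_sub_atTop_nat q)
    have h2 : Tendsto (fun j : ℕ => D (j + 1)) atTop (nhds (⨅ j, D j)) :=
      hDtend.comp (tendsto_add_atTop_nat 1)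
    have := (h1.sub h2).const_mul (2 / δ)
    simpa using this
  refine ⟨⟨R, hxb⟩, ⟨R, hvb⟩, hsub x hxb, hsub v hvb, ?_⟩
  exact tendsto_of_tendsto_of_tendsto_of_le_of_le' tendsto_const_nhds htendR
    (Eventually.of_forall hm0) (eventually_atTop.mpr ⟨q, hkey⟩)
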